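/- Let M be an n×n matrix over RatFunc ℂ all of whose entries have intDegree ≤ 0, and let ε > 0. Then every eigenvalue of M is an ε-pseudoeigenvalue: every complex root λ₀ of (det (M - X • 1)).num belongs to σ_ε(M) = closure {λ ∈ dom(N) : ‖N(λ)‖ > ε⁻¹}, where N := (M - X • 1)⁻¹ is the resolvent of M. -/

import Mathlib

set_option synthInstance.maxHeartbeats 1000000
set_option maxHeartbeats 1000000

open Matrix

/-- The L2 operator norm of a complex matrix (the norm induced by the Euclidean norm). -/
noncomputable def l2OpNorm {a b : Type} [Fintype a] [Fintype b] [DecidableEq b]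
    (A : Matrix a b ℂ) : ℝ :=
  ‖LinearMap.toContinuousLinearMap (Matrix.toEuclideanLin A)‖

/-- Entrywise evaluation of a matrix over `RatFunc ℂ` at `lam`. -/
noncomputable def evalMat {a b : Type} (A : Matrix a b (RatFunc ℂ)) (lam : ℂ) : Matrix a b ℂ :=
  Matrix.of fun i j => RatFunc.eval (RingHom.id ℂ) lam (A i j)

/-- The ε-pseudospectrum of a matrix over `RatFunc ℂ`, defined via the resolvent
`N = (A - X•1)⁻¹` and the L2 operator norm. -/
noncomputable def pseudoSpec {a : Type} [Fintype a] [DecidableEq a]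
    (A : Matrix a a (RatFunc ℂ)) (eps : ℝ) : Set ℂ :=
  closure {lam : ℂ |
    (∀ i j, (((A - (RatFunc.X : RatFunc ℂ) • 1)⁻¹) i j).denom.eval lam ≠ 0) ∧
    eps⁻¹ < l2OpNorm (evalMat (A - (RatFunc.X : RatFunc ℂ) • 1)⁻¹ lam)}

noncomputable local instance : DecidableEq (RatFunc ℂ) := Classical.decEq _

lemma aux_val_le_one (x : RatFunc ℂ) (hx : x.intDegree ≤ 0) :
    FunctionField.inftyValuation ℂ x ≤ 1 := by
  classical
  rcases eq_or_ne x 0 with rfl | hx0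
  · simp [FunctionField.inftyValuation_apply, FunctionField.InftyValuation.map_zero']
  · rw [show FunctionField.inftyValuation ℂ x = RatFunc.inftyValuation ℂ x from rfl, FunctionField.inftyValuation_apply, FunctionField.inftyValuation_of_nonzero ℂ hx0]
    rw [← WithZero.exp_zero]
    exact WithZero.exp_le_exp.mpr hx

lemma aux_det_ne_zero {n : ℕ} (M : Matrix (Fin n) (Fin n) (RatFunc ℂ))
    (hdeg : ∀ i j, (M i j).intDegree ≤ 0) :
    (M - (RatFunc.X : RatFunc ℂ) • 1).det ≠ 0 := by
  classical
  intro hdet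
  obtain ⟨v, hv, hmul⟩ := (Matrix.exists_mulVec_eq_zero_iff).mpr hdet
  set w := FunctionField.inftyValuation ℂ with hw
  obtain ⟨i, hi⟩ := Function.ne_iff.mp hv
  obtain ⟨i₀, -, hmax⟩ := Finset.exists_max_image Finset.univ (fun i => w (v i)) ⟨i, Finset.mem_univ i⟩
  have hvi₀ : w (v i₀) ≠ 0 := by
    intro h0
    have := hmax i (Finset.mem_univ i)
    rw [h0] at this
    exact hi (w.zero_iff.mp (le_antisymm this bot_le))
  have key : M *ᵥ v = (RatFunc.X : RatFunc ℂ) • v := by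
    have : M *ᵥ v - (RatFunc.X : RatFunc ℂ) • v = 0 := by
      rw [← hmul, Matrix.sub_mulVec, Matrix.smul_mulVec, Matrix.one_mulVec]
    have := sub_eq_zero.mp this
    exact this
  have hL : w ((M *ᵥ v) i₀) ≤ w (v i₀) := by
    rw [Matrix.mulVec, dotProduct]
    refine w.map_sum_le fun j _ => ?_
    rw [w.map_mul]
    calc w (M i₀ j) * w (v j) ≤ 1 * w (v i₀) :=
          mul_le_mul' (aux_val_le_one _ (hdeg i₀ j)) (hmax j (Finset.mem_univ j))
      _ = w (v i₀) := one_mul _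
  have hR : w (v i₀) < w (((RatFunc.X : RatFunc ℂ) • v) i₀) := by
    rw [Pi.smul_apply, smul_eq_mul, w.map_mul]
    have hX : (1 : WithZero (Multiplicative ℤ)) < w RatFunc.X := by
      rw [hw, show FunctionField.inftyValuation ℂ RatFunc.X = RatFunc.inftyValuation ℂ RatFunc.X from rfl, FunctionField.inftyValuation.X]
      rw [← WithZero.exp_zero]
      exact WithZero.exp_lt_exp.mpr (by norm_num : (0:ℤ) < 1)
    calc w (v i₀) = w (v i₀) * 1 := (mul_one _).symm
      _ < w RatFunc.X * w (v i₀) := by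
          exact (mul_lt_mul_of_pos_left hX (zero_lt_iff.mpr hvi₀)).trans_eq (mul_comm _ _)
  rw [key] at hL
  exact absurd hL (not_le.mpr hR)

lemma aux_entry_le_l2OpNorm {m : ℕ} (A : Matrix (Fin m) (Fin m) ℂ) (i j : Fin m) :
    ‖A i j‖ ≤ l2OpNorm A := by
  set T := LinearMap.toContinuousLinearMap (Matrix.toEuclideanLin A) with hT
  have key : T (EuclideanSpace.single j (1:ℂ)) =
      (WithLp.equiv 2 (Fin m → ℂ)).symm (A *ᵥ Pi.single j 1) := by
    rw [hT]
    simp only [LinearMap.coe_toContinuousLinearMap']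
    rfl
  have hAv : (A *ᵥ Pi.single j 1) = fun k => A k j := by
    funext k
    rw [Matrix.mulVec_single]
    exact mul_one _
  have h2 : ‖A i j‖ ≤ ‖T (EuclideanSpace.single j (1:ℂ))‖ := by
    rw [key, hAv]
    rw [EuclideanSpace.norm_eq]
    have : ‖A i j‖ = Real.sqrt (‖A i j‖ ^ 2) := (Real.sqrt_sq (norm_nonneg _)).symm
    rw [this]
    apply Real.sqrt_le_sqrt
    have := Finset.single_le_sum (f := fun k => ‖A k j‖ ^ 2)
      (fun k _ => sq_nonneg _) (Finset.mem_univ i)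
    simpa using this
  calc ‖A i j‖ ≤ ‖T (EuclideanSpace.single j (1:ℂ))‖ := h2
    _ ≤ ‖T‖ * ‖EuclideanSpace.single j (1:ℂ)‖ := T.le_opNorm _
    _ = ‖T‖ := by rw [EuclideanSpace.norm_single]; simp
    _ = l2OpNorm A := rfl

lemma aux_eval_dvd {p q : Polynomial ℂ} {lam : ℂ} (h : p ∣ q) (hq : q.eval lam ≠ 0) :
    p.eval lam ≠ 0 := by
  obtain ⟨r, rfl⟩ := h
  simp only [Polynomial.eval_mul, ne_eq, mul_eq_zero, not_or] at hq
  exact hq.1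

noncomputable def evalSubring (lam : ℂ) : Subring (RatFunc ℂ) where
  carrier := {x | x.denom.eval lam ≠ 0}
  one_mem' := by simp [RatFunc.denom_one]
  zero_mem' := by simp [RatFunc.denom_zero]
  mul_mem' := fun {x y} hx hy =>
    aux_eval_dvd (RatFunc.denom_mul_dvd x y) (by simp only [Polynomial.eval_mul]; exact mul_ne_zero hx hy)
  add_mem' := fun {x y} hx hy =>
    aux_eval_dvd (RatFunc.denom_add_dvd x y) (by simp only [Polynomial.eval_mul]; exact mul_ne_zero hx hy)
  neg_mem' := by
    intro x hx
    have : (-x).denom ∣ (-1 : RatFunc ℂ).denom * x.denom := by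
      simpa using RatFunc.denom_mul_dvd (-1) x
    refine aux_eval_dvd this ?_
    have h1 : (-1 : RatFunc ℂ).denom = 1 := by
      have := RatFunc.denom_algebraMap (K := ℂ) (-1)
      simpa using this
    simp only [h1, Polynomial.eval_mul, Polynomial.eval_one, one_mul]
    exact hx

lemma aux_det_denom {n : ℕ} (lam : ℂ) (N : Matrix (Fin n) (Fin n) (RatFunc ℂ))
    (hN : ∀ i j, (N i j).denom.eval lam ≠ 0) : N.det.denom.eval lam ≠ 0 := by
  classical
  set S := evalSubring lam
  set N' : Matrix (Fin n) (Fin n) S := Matrix.of fun i j => (⟨N i j, hN i j⟩ : S) with hN'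
  have hmap : N = (S.subtype).mapMatrix N' := by ext i j; rfl
  have : N.det = S.subtype N'.det := by rw [hmap, ← RingHom.map_det]
  exact this ▸ (N'.det).2

lemma aux_coprime_eval (x : RatFunc ℂ) (lam : ℂ) (h : x.num.eval lam = 0) :
    x.denom.eval lam ≠ 0 := by
  intro hd
  have hc := RatFunc.isCoprime_num_denom x
  have h1 : (Polynomial.X - Polynomial.C lam) ∣ x.num := Polynomial.dvd_iff_isRoot.mpr h
  have h2 : (Polynomial.X - Polynomial.C lam) ∣ x.denom := Polynomial.dvd_iff_isRoot.mpr hd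
  exact Polynomial.not_isUnit_X_sub_C lam (hc.isUnit_of_dvd' h1 h2)

lemma aux_exists_pole {n : ℕ} (A : Matrix (Fin n) (Fin n) (RatFunc ℂ)) (lam : ℂ)
    (hd : A.det ≠ 0) (hnum : (A.det).num.eval lam = 0) :
    ∃ i j, ((A⁻¹) i j).denom.eval lam = 0 := by
  classical
  by_contra hall
  push_neg at hall
  have hdetmul : (A⁻¹).det * A.det = 1 := by
    rw [← Matrix.det_mul, Matrix.nonsing_inv_mul A (isUnit_iff_ne_zero.mpr hd), Matrix.det_one]
  have h1 : ((A⁻¹).det).denom.eval lam ≠ 0 := aux_det_denom lam _ hall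
  have h2 : (A.det).denom.eval lam ≠ 0 := aux_coprime_eval _ lam hnum
  have h1' : Polynomial.eval₂ (RingHom.id ℂ) lam ((A⁻¹).det).denom ≠ 0 := h1
  have h2' : Polynomial.eval₂ (RingHom.id ℂ) lam (A.det).denom ≠ 0 := h2
  have heval := RatFunc.eval_mul (f := RingHom.id ℂ) (a := lam) h1' h2'
  rw [hdetmul, RatFunc.eval_one] at heval
  have hzero : RatFunc.eval (RingHom.id ℂ) lam A.det = 0 := by
    rw [RatFunc.eval]
    have : Polynomial.eval₂ (RingHom.id ℂ) lam (A.det).num = 0 := hnum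
    rw [this, zero_div]
  rw [hzero, mul_zero] at heval
  exact one_ne_zero heval

theorem eigenvalue_mem_pseudoSpec {n : ℕ}
    (M : Matrix (Fin n) (Fin n) (RatFunc ℂ))
    (hdeg : ∀ i j, (M i j).intDegree ≤ 0)
    (eps : ℝ) (heps : 0 < eps)
    (lam : ℂ) (h : (((M - (RatFunc.X : RatFunc ℂ) • 1).det).num).eval lam = 0) :
    lam ∈ pseudoSpec M eps := by
  classical
  have hd : (M - (RatFunc.X : RatFunc ℂ) • 1).det ≠ 0 := aux_det_ne_zero M hdeg
  obtain ⟨i, j, hpole⟩ := aux_exists_pole (M - (RatFunc.X : RatFunc ℂ) • 1) lam hd h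
  set N := (M - (RatFunc.X : RatFunc ℂ) • 1)⁻¹ with hN
  set w := N i j with hw
  have hwnum : w.num.eval lam ≠ 0 := fun h0 => aux_coprime_eval w lam h0 hpole
  set c := ‖w.num.eval lam‖ with hc
  have hc0 : 0 < c := norm_pos_iff.mpr hwnum
  -- the open neighborhood where the numerator is big and the denominator is small
  set U : Set ℂ := {μ | c/2 < ‖w.num.eval μ‖ ∧ ‖w.denom.eval μ‖ < c/2*eps} with hU
  have hUopen : IsOpen U := by
    apply IsOpen.inter
    · exact isOpen_lt continuous_const ((Polynomial.continuous w.num).norm)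
    · exact isOpen_lt ((Polynomial.continuous w.denom).norm) continuous_const
  have hlamU : lam ∈ U := by
    constructor
    · exact half_lt_self hc0
    · show ‖Polynomial.eval lam w.denom‖ < c / 2 * eps
      rw [hpole]
      simpa using by positivity
  obtain ⟨δ₁, hδ₁, hball⟩ := Metric.isOpen_iff.mp hUopen lam hlamU
  -- the finite set of poles
  set B : Set ℂ := ⋃ k, ⋃ l, {μ | ((N k l).denom).eval μ = 0} with hB
  have hBfin : B.Finite := by
    apply Set.finite_iUnion; intro k
    apply Set.finite_iUnion; intro l
    exact Polynomial.finite_setOf_isRoot (RatFunc.denom_ne_zero _)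
  simp only [pseudoSpec]
  rw [Metric.mem_closure_iff]
  intro δ hδ
  set δ' := min δ δ₁ with hδ'
  have hδ'0 : 0 < δ' := lt_min hδ hδ₁
  -- choose a good nearby point
  have hRfin : ((fun r : ℝ => lam + (r : ℂ)) ⁻¹' B).Finite := by
    apply Set.Finite.preimage _ hBfin
    intro a _ b _ hab
    have : (a : ℂ) = b := by
      have := hab
      simpa using add_left_cancel hab
    exact_mod_cast this
  have hinf : (Set.Ioo (0:ℝ) δ' \ ((fun r : ℝ => lam + (r : ℂ)) ⁻¹' B)).Infinite :=
    (Set.Ioo_infinite hδ'0).diff hRfin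
  obtain ⟨r, hr⟩ := hinf.nonempty
  obtain ⟨⟨hr0, hrδ⟩, hrB⟩ := hr
  set μ := lam + (r : ℂ) with hμ
  have hdist : dist lam μ < δ' := by
    rw [hμ, dist_comm]
    simp only [Complex.dist_eq, add_sub_cancel_left, Complex.norm_real, Real.norm_eq_abs]
    rwa [abs_of_pos hr0]
  have hμB : ∀ k l, ((N k l).denom).eval μ ≠ 0 := by
    intro k l h0
    exact hrB (by simp only [hB, Set.mem_preimage, Set.mem_iUnion]; exact ⟨k, l, h0⟩)
  have hμU : μ ∈ U := hball (by rw [Metric.mem_ball, dist_comm]; exact hdist.trans_le (min_le_right _ _))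
  obtain ⟨hnum_big, hden_small⟩ := hμU
  have hdenpos : 0 < ‖w.denom.eval μ‖ := norm_pos_iff.mpr (hμB i j)
  have hkey : eps⁻¹ < ‖w.num.eval μ‖ / ‖w.denom.eval μ‖ := by
    rw [lt_div_iff₀ hdenpos]
    calc eps⁻¹ * ‖w.denom.eval μ‖ < eps⁻¹ * (c/2*eps) := by
          exact mul_lt_mul_of_pos_left hden_small (inv_pos.mpr heps)
      _ = c/2 := by field_simp
      _ < ‖w.num.eval μ‖ := hnum_big
  refine ⟨μ, ⟨hμB, ?_⟩, hdist.trans_le (min_le_left _ _)⟩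
  have hentry : evalMat N μ i j = w.num.eval μ / w.denom.eval μ := rfl
  calc eps⁻¹ < ‖evalMat N μ i j‖ := by rw [hentry, norm_div]; exact hkey
    _ ≤ l2OpNorm (evalMat N μ) := aux_entry_le_l2OpNorm _ i j
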